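/- Let G be a disconnected finite simple graph with independence number at most 3 and let u, v be vertices of G. Then V(G) can be partitioned into two vertex-disjoint paths, one starting at u and the other at v, if and only if G has exactly 2 connected components, u and v lie in different components, and neither u nor v is a cut vertex of its own component. -/

import Mathlib

open SimpleGraph

variable {V : Type*}

/-- `G` has independence number at most `k`: every independent set has at most `k` vertices. -/
def IndepBound (G : SimpleGraph V) (k : ℕ) : Prop :=
  ∀ s : Finset V, (∀ a ∈ s, ∀ b ∈ s, a ≠ b → ¬ G.Adj a b) → s.card ≤ k

/-- The induced subgraph on `A` has independence number at most `k`. -/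
def IndepBoundOn (G : SimpleGraph V) (A : Set V) (k : ℕ) : Prop :=
  ∀ s : Finset V, ↑s ⊆ A → (∀ a ∈ s, ∀ b ∈ s, a ≠ b → ¬ G.Adj a b) → s.card ≤ k

/-- `x` is a cut vertex (articulation point): `G - x` is disconnected. -/
def IsCutVertex (G : SimpleGraph V) (x : V) : Prop :=
  ¬ (G.induce ({x}ᶜ : Set V)).Preconnected

/-- `S` is a vertex cut: `G - S` is disconnected. -/
def IsCutSet (G : SimpleGraph V) (S : Set V) : Prop :=
  ¬ (G.induce Sᶜ).Preconnected

/-- `G` has a Hamiltonian path with endpoints `u` and `v`. -/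
def HasHamPathBetween [DecidableEq V] (G : SimpleGraph V) (u v : V) : Prop :=
  ∃ p : G.Walk u v, p.IsHamiltonian

/-- `G` has a Hamiltonian path starting at `u`. -/
def HasHamPathFrom [DecidableEq V] (G : SimpleGraph V) (u : V) : Prop :=
  ∃ v, ∃ p : G.Walk u v, p.IsHamiltonian

/-- `G` has a Hamiltonian path. -/
def HasHamPath [DecidableEq V] (G : SimpleGraph V) : Prop :=
  ∃ u v, ∃ p : G.Walk u v, p.IsHamiltonian

/-- `G` has a path cover of size two: two vertex-disjoint paths, one starting at `u`
and the other starting at `v`, whose vertex sets partition `V(G)`. -/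
def HasPathCover2 (G : SimpleGraph V) (u v : V) : Prop :=
  ∃ (a b : V) (p : G.Walk u a) (q : G.Walk v b), p.IsPath ∧ q.IsPath ∧
    ∀ w, (w ∈ p.support ∧ w ∉ q.support) ∨ (w ∈ q.support ∧ w ∉ p.support)

/-- `G` is `s`-connected: more than `s` vertices, and removing any fewer than `s`
vertices leaves the graph connected. -/
def SConnected (G : SimpleGraph V) (s : ℕ) : Prop :=
  s < Nat.card V ∧ ∀ S : Set V, S.ncard < s → (G.induce Sᶜ).Connected

section Aux

variable {W : Type*}

/-- Inclusion hom from induced subgraph. -/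
def inclHom (H : SimpleGraph W) (A : Set W) : H.induce A →g H where
  toFun := Subtype.val
  map_rel' := fun h => h

lemma lift_walk {H : SimpleGraph W} {A : Set W} :
    ∀ {a b : W} (p : H.Walk a b), (∀ x ∈ p.support, x ∈ A) → ∀ (ha : a ∈ A) (hb : b ∈ A),
      ∃ q : (H.induce A).Walk ⟨a, ha⟩ ⟨b, hb⟩, q.support.map Subtype.val = p.support := by
  intro a b p
  induction p with
  | nil =>
    intro hs ha hb
    exact ⟨.nil, by simp⟩
  | @cons a c b h p ih =>
    intro hs ha hb
    have hc : c ∈ A := hs c (by simp)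
    obtain ⟨q, hq⟩ := ih (fun x hx => hs x (by simp [hx])) hc hb
    refine ⟨.cons (by simpa using h) q, ?_⟩
    rw [Walk.support_cons, Walk.support_cons, List.map_cons, hq]

lemma lift_walk_mem {H : SimpleGraph W} {A : Set W} {a b : W} {p : H.Walk a b}
    {ha : a ∈ A} {hb : b ∈ A} {q : (H.induce A).Walk ⟨a, ha⟩ ⟨b, hb⟩}
    (hq : q.support.map Subtype.val = p.support) :
    ∀ x ∈ q.support, (x : W) ∈ p.support := by
  intro x hx
  rw [← hq]
  exact List.mem_map_of_mem hx

lemma exists_noncut [Fintype W] (H : SimpleGraph W) (hc : H.Connected) :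
    ∃ x : W, (H.induce ({x}ᶜ : Set W)).Preconnected := by
  classical
  obtain ⟨r⟩ := hc.nonempty
  by_cases hsub : ∀ y : W, y = r
  · refine ⟨r, ?_⟩
    intro a b
    exact absurd (hsub a.1) a.2
  · push_neg at hsub
    obtain ⟨y0, hy0⟩ := hsub
    obtain ⟨x, -, hmax⟩ := Finset.exists_max_image Finset.univ (fun y => H.dist r y)
      ⟨r, Finset.mem_univ r⟩
    have hmax' : ∀ y, H.dist r y ≤ H.dist r x := fun y => hmax y (Finset.mem_univ y)
    have hxr : x ≠ r := by
      intro h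
      have h0 : 0 < H.dist r y0 := hc.pos_dist_of_ne (Ne.symm hy0)
      have := hmax' y0
      rw [h, SimpleGraph.dist_self] at this
      omega
    refine ⟨x, ?_⟩
    have key : ∀ w : W, w ≠ x → ∃ p : H.Walk r w, x ∉ p.support := by
      intro w hw
      obtain ⟨p, hp⟩ := hc.exists_walk_length_eq_dist r w
      refine ⟨p, ?_⟩
      intro hx
      have hsplit : (p.takeUntil x hx).append (p.dropUntil x hx) = p := p.take_spec hx
      have hlen := congrArg Walk.length hsplit
      rw [Walk.length_append] at hlen
      have h1 : H.dist r x ≤ (p.takeUntil x hx).length := SimpleGraph.dist_le _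
      have h2 : (p.dropUntil x hx).length ≠ 0 := by
        intro h0
        exact (Ne.symm hw) (Walk.eq_of_length_eq_zero h0)
      have h3 : H.dist r w ≤ H.dist r x := hmax' w
      omega
    intro a b
    have ha : (a : W) ≠ x := a.2
    have hb : (b : W) ≠ x := b.2
    obtain ⟨pa, hpa⟩ := key a.1 ha
    obtain ⟨pb, hpb⟩ := key b.1 hb
    have hrx : r ∈ ({x}ᶜ : Set W) := by simpa using Ne.symm hxr
    obtain ⟨qa, -⟩ := lift_walk (A := ({x}ᶜ : Set W)) pa
      (fun z hz => by simp only [Set.mem_compl_iff, Set.mem_singleton_iff]; rintro rfl; exact hpa hz) hrx ha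
    obtain ⟨qb, -⟩ := lift_walk (A := ({x}ᶜ : Set W)) pb
      (fun z hz => by simp only [Set.mem_compl_iff, Set.mem_singleton_iff]; rintro rfl; exact hpb hz) hrx hb
    exact ⟨(qa.reverse.append qb)⟩

end Aux

section Ham

variable {W : Type*} [Fintype W] [DecidableEq W]

lemma ham_of_cover {H : SimpleGraph W} {a b : W} {p : H.Walk a b} (hp : p.IsPath)
    (hcov : ∀ w : W, w ∈ p.support) : p.IsHamiltonian :=
  hp.isHamiltonian_iff.mpr hcov

lemma attach_hampath (H : SimpleGraph W) (hα : IndepBound H 2)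
    {x a b : W} (p : H.Walk a b) (hp : p.IsPath) (hsup : ∀ y, y ∈ p.support ↔ y ≠ x)
    (z : W) (hxz : H.Adj x z) : ∃ c, ∃ P : H.Walk x c, P.IsHamiltonian := by
  have hxs : x ∉ p.support := fun h => (hsup x).mp h rfl
  have ha : a ≠ x := (hsup a).mp p.start_mem_support
  have hb : b ≠ x := (hsup b).mp p.end_mem_support
  have hz : z ≠ x := hxz.ne'
  have hzs : z ∈ p.support := (hsup z).mpr hz
  by_cases hA : H.Adj x a
  · refine ⟨b, Walk.cons hA p, ham_of_cover (hp.cons hxs) ?_⟩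
    intro w
    rw [Walk.support_cons, List.mem_cons]
    by_cases hw : w = x
    · exact Or.inl hw
    · exact Or.inr ((hsup w).mpr hw)
  by_cases hB : H.Adj x b
  · refine ⟨a, Walk.cons hB p.reverse, ham_of_cover (hp.reverse.cons ?_) ?_⟩
    · rw [Walk.support_reverse, List.mem_reverse]; exact hxs
    · intro w
      rw [Walk.support_cons, List.mem_cons, Walk.support_reverse, List.mem_reverse]
      by_cases hw : w = x
      · exact Or.inl hw
      · exact Or.inr ((hsup w).mpr hw)
  -- neither endpoint adjacent to x
  have hab : a ≠ b := by
    rintro rfl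
    have : p = Walk.nil := Walk.isPath_iff_eq_nil.mp hp
    rw [this] at hzs
    simp only [Walk.support_nil, List.mem_singleton] at hzs
    exact hB (hzs ▸ hxz)
  have hadj : H.Adj a b := by
    by_contra hnadj
    have hcard := hα {x, a, b} ?_
    · rw [Finset.card_insert_of_notMem (by simp [Ne.symm ha, Ne.symm hb]),
        Finset.card_insert_of_notMem (by simp [hab]), Finset.card_singleton] at hcard
      omega
    · intro c hc d hd hcd
      simp only [Finset.mem_insert, Finset.mem_singleton] at hc hd
      rcases hc with rfl | rfl | rfl <;> rcases hd with rfl | rfl | rfl <;>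
        first
          | exact absurd rfl hcd
          | assumption
          | exact fun h => hA h.symm
          | exact fun h => hB h.symm
          | exact fun h => hnadj h.symm
          | exact hnadj
  -- p has length ≥ 2, and s(b,a) ∉ p.edges
  have hedge : s(b, a) ∉ p.edges := by
    cases p with
    | nil => exact absurd rfl hab
    | @cons _ c _ h' p₂ =>
      intro hmem
      rw [Walk.edges_cons, List.mem_cons] at hmem
      rcases hmem with heq | hmem
      · have hbc : b = c := by
          rw [Sym2.eq_iff] at heq
          rcases heq with ⟨rfl, rfl⟩ | ⟨h1, -⟩
          · exact absurd rfl hab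
          · exact h1
        subst hbc
        have hp₂ : p₂ = Walk.nil := Walk.isPath_iff_eq_nil.mp hp.of_cons
        subst hp₂
        rw [Walk.support_cons, Walk.support_nil, List.mem_cons, List.mem_singleton] at hzs
        rcases hzs with rfl | rfl
        · exact hA hxz
        · exact hB hxz
      · rw [Sym2.eq_swap] at hmem
        have : a ∈ p₂.support := Walk.fst_mem_support_of_mem_edges p₂ hmem
        rw [Walk.cons_isPath_iff] at hp
        exact hp.2 this
  have hcyc : (Walk.cons hadj.symm p).IsCycle :=
    (Walk.cons_isCycle_iff p hadj.symm).mpr ⟨hp, hedge⟩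
  have hzc : z ∈ (Walk.cons hadj.symm p).support := by
    rw [Walk.support_cons, List.mem_cons]; exact Or.inr hzs
  set c := (Walk.cons hadj.symm p).rotate z hzc with hc
  have hcyc' : c.IsCycle := hcyc.rotate hzc
  have hnn : ¬ c.Nil := hcyc'.not_nil
  have hqsup : c.tail.support = c.support.tail := Walk.support_tail_of_not_nil c hnn
  have hq : c.tail.IsPath := Walk.IsPath.mk' (by rw [hqsup]; exact hcyc'.support_nodup)
  have hmemq : ∀ y, y ∈ c.tail.support ↔ y ∈ p.support := by
    intro y
    rw [hqsup, (Walk.support_rotate (Walk.cons hadj.symm p) z hzc).mem_iff]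
    rw [Walk.support_cons, List.tail_cons]
  have hxq : x ∉ c.tail.support := fun h => hxs ((hmemq x).mp h)
  refine ⟨_, Walk.cons hxz c.tail.reverse, ham_of_cover (hq.reverse.cons ?_) ?_⟩
  · rw [Walk.support_reverse, List.mem_reverse]; exact hxq
  · intro w
    rw [Walk.support_cons, List.mem_cons, Walk.support_reverse, List.mem_reverse, hmemq]
    by_cases hw : w = x
    · exact Or.inl hw
    · exact Or.inr ((hsup w).mpr hw)

end Ham

universe u

lemma exists_adj_of_reachable_ne {W : Type u} {H : SimpleGraph W} {x y : W}
    (h : H.Reachable x y) (hxy : x ≠ y) : ∃ z, H.Adj x z := by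
  obtain ⟨p⟩ := h
  cases p with
  | nil => exact absurd rfl hxy
  | cons h' _ => exact ⟨_, h'⟩

lemma indep2_induce {W : Type u} [DecidableEq W] {H : SimpleGraph W} (hα : IndepBound H 2)
    (A : Set W) : IndepBound (H.induce A) 2 := by
  intro s hs
  classical
  have := hα (s.map ⟨Subtype.val, Subtype.val_injective⟩) ?_
  · simpa using this
  · intro c hc d hd hcd
    simp only [Finset.mem_map, Function.Embedding.coeFn_mk] at hc hd
    obtain ⟨c', hc', rfl⟩ := hc
    obtain ⟨d', hd', rfl⟩ := hd
    exact hs c' hc' d' hd' (fun h => hcd (congrArg _ h))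

lemma ham_of_indep2 (n : ℕ) :
    ∀ {W : Type u} [Fintype W] [DecidableEq W] (H : SimpleGraph W),
      Fintype.card W ≤ n → H.Connected → IndepBound H 2 →
      ∃ a b, ∃ p : H.Walk a b, p.IsHamiltonian := by
  induction n with
  | zero =>
    intro W _ _ H hcard hc _
    obtain ⟨r⟩ := hc.nonempty
    have : 0 < Fintype.card W := Fintype.card_pos_iff.mpr ⟨r⟩
    omega
  | succ n ih =>
    intro W _ _ H hcard hc hα
    classical
    obtain ⟨x, hx⟩ := exists_noncut H hc
    by_cases h1 : Fintype.card W ≤ 1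
    · obtain ⟨r⟩ := hc.nonempty
      refine ⟨r, r, Walk.nil, ?_⟩
      intro w
      have hw : w = r := Fintype.card_le_one_iff.mp h1 w r
      subst hw
      simp [Walk.support_nil]
    · push_neg at h1
      obtain ⟨y, hy⟩ := Fintype.exists_ne_of_one_lt_card h1 x
      have hyA : y ∈ ({x}ᶜ : Set W) := hy
      have hne : Nonempty ({x}ᶜ : Set W) := ⟨⟨y, hyA⟩⟩
      have hconn : (H.induce ({x}ᶜ : Set W)).Connected := by
        haveI := hne; exact ⟨hx⟩
      have hcard' : Fintype.card ({x}ᶜ : Set W) ≤ n := by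
        have h2 := Fintype.card_compl_set ({x} : Set W)
        have h3 : Fintype.card ({x} : Set W) = 1 := by simp
        omega
      obtain ⟨a', b', p', hham⟩ := ih (H.induce ({x}ᶜ : Set W)) hcard' hconn
        (indep2_induce hα _)
      -- map to H
      have hinj : Function.Injective (inclHom H ({x}ᶜ : Set W)) := Subtype.val_injective
      set p := p'.map (inclHom H ({x}ᶜ : Set W)) with hpdef
      have hp : p.IsPath := Walk.map_isPath_of_injective hinj hham.isPath
      have hsup : ∀ w, w ∈ p.support ↔ w ≠ x := by
        intro w
        rw [hpdef, Walk.support_map, List.mem_map]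
        constructor
        · rintro ⟨c, -, rfl⟩
          exact c.2
        · intro hw
          exact ⟨⟨w, hw⟩, hham.mem_support _, rfl⟩
      obtain ⟨z, hxz⟩ := exists_adj_of_reachable_ne (hc x y) (Ne.symm hy)
      obtain ⟨cc, P, hP⟩ := attach_hampath H hα p hp hsup z hxz
      exact ⟨x, cc, P, hP⟩

lemma hampath_from_noncut {W : Type u} [Fintype W] [DecidableEq W] (H : SimpleGraph W)
    (hc : H.Connected) (hα : IndepBound H 2) (u : W) (hu : ¬ IsCutVertex H u) :
    ∃ b, ∃ p : H.Walk u b, p.IsHamiltonian := by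
  classical
  by_cases hone : ∀ y : W, y = u
  · refine ⟨u, Walk.nil, ?_⟩
    intro w
    have hw := hone w
    subst hw
    simp [Walk.support_nil]
  · push_neg at hone
    obtain ⟨y, hy⟩ := hone
    have hpre : (H.induce ({u}ᶜ : Set W)).Preconnected := not_not.mp hu
    have hne : Nonempty ({u}ᶜ : Set W) := ⟨⟨y, hy⟩⟩
    have hconn : (H.induce ({u}ᶜ : Set W)).Connected := by
      haveI := hne; exact ⟨hpre⟩
    obtain ⟨a', b', p', hham⟩ := ham_of_indep2 (Fintype.card ({u}ᶜ : Set W))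
      (H.induce ({u}ᶜ : Set W)) le_rfl hconn (indep2_induce hα _)
    have hinj : Function.Injective (inclHom H ({u}ᶜ : Set W)) := Subtype.val_injective
    set p := p'.map (inclHom H ({u}ᶜ : Set W)) with hpdef
    have hp : p.IsPath := Walk.map_isPath_of_injective hinj hham.isPath
    have hsup : ∀ w, w ∈ p.support ↔ w ≠ u := by
      intro w
      rw [hpdef, Walk.support_map, List.mem_map]
      constructor
      · rintro ⟨c, -, rfl⟩
        exact c.2
      · intro hw
        exact ⟨⟨w, hw⟩, hham.mem_support _, rfl⟩
    obtain ⟨z, huz⟩ := exists_adj_of_reachable_ne (hc u y) (Ne.symm hy)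
    obtain ⟨cc, P, hP⟩ := attach_hampath H hα p hp hsup z huz
    exact ⟨cc, P, hP⟩

lemma reachable_in_induce_of_walk_support {W : Type u} {H : SimpleGraph W} {A : Set W}
    {s t : W} (r : H.Walk s t) (hr : ∀ x ∈ r.support, x ∈ A) {y z : W}
    (hy : y ∈ r.support) (hz : z ∈ r.support) (hyA : y ∈ A) (hzA : z ∈ A) :
    (H.induce A).Reachable ⟨y, hyA⟩ ⟨z, hzA⟩ := by
  classical
  by_cases hz' : z ∈ (r.dropUntil y hy).support
  · obtain ⟨q, -⟩ := lift_walk ((r.dropUntil y hy).takeUntil z hz')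
      (fun x hx => hr x (Walk.support_dropUntil_subset r hy
        (Walk.support_takeUntil_subset _ hz' hx))) hyA hzA
    exact ⟨q⟩
  · have hz2 : z ∈ (r.takeUntil y hy).support := by
      have h3 := hz
      rw [← r.take_spec hy, Walk.mem_support_append_iff] at h3
      tauto
    obtain ⟨q, -⟩ := lift_walk ((r.takeUntil y hy).dropUntil z hz2)
      (fun x hx => hr x (Walk.support_takeUntil_subset r hy
        (Walk.support_dropUntil_subset _ hz2 hx))) hzA hyA
    exact ⟨q.reverse⟩

lemma noncut_of_hampath {W : Type u} (H : SimpleGraph W) {u a : W}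
    (p : H.Walk u a) (hp : p.IsPath) (hcov : ∀ w : W, w ∈ p.support) :
    ¬ IsCutVertex H u := by
  classical
  rw [IsCutVertex, not_not]
  intro c d
  have hc : (c : W) ≠ u := c.2
  have hd : (d : W) ≠ u := d.2
  have hnil : ¬ p.Nil := by
    intro hn
    have hlen : p.length = 0 := Walk.nil_iff_length_eq.mp hn
    have h1 : p.support.length = 1 := by rw [Walk.length_support, hlen]
    obtain ⟨w, hw⟩ := List.length_eq_one_iff.mp h1
    have h2 := hcov c.1
    have h3 := hcov u
    rw [hw, List.mem_singleton] at h2 h3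
    exact hc (h2.trans h3.symm)
  have hts : p.tail.support = p.support.tail := Walk.support_tail_of_not_nil p hnil
  have hnd := hp.support_nodup
  rw [p.support_eq_cons] at hnd
  have hu_tail : u ∉ p.support.tail := (List.nodup_cons.mp hnd).1
  have hmem : ∀ w, w ∈ p.tail.support ↔ w ≠ u := by
    intro w
    rw [hts]
    constructor
    · intro hw
      rintro rfl
      exact hu_tail hw
    · intro hw
      have h4 := hcov w
      rw [p.support_eq_cons, List.mem_cons] at h4
      rcases h4 with rfl | h4
      · exact absurd rfl hw
      · exact h4
  have hcs : (c : W) ∈ p.tail.support := (hmem _).mpr hc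
  have hds : (d : W) ∈ p.tail.support := (hmem _).mpr hd
  exact reachable_in_induce_of_walk_support p.tail
    (fun x hx => (hmem x).mp hx) hcs hds c.2 d.2

/-- A disconnected graph with independence number at most 3 has a path cover PC(u,v) iff
it has exactly 2 components, u and v are in different components, and neither u nor v is
a cut vertex of its own component. -/
theorem stmt_18 [Fintype V] [DecidableEq V] (G : SimpleGraph V)
    (hdisc : ¬ G.Connected) (hα : IndepBound G 3) (u v : V) :
    HasPathCover2 G u v ↔
      Nat.card G.ConnectedComponent = 2 ∧
      G.connectedComponentMk u ≠ G.connectedComponentMk v ∧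
      ¬ IsCutVertex (G.induce (G.connectedComponentMk u).supp) ⟨u, rfl⟩ ∧
      ¬ IsCutVertex (G.induce (G.connectedComponentMk v).supp) ⟨v, rfl⟩ := by
  classical
  set A : Set V := (G.connectedComponentMk u).supp with hA
  set B : Set V := (G.connectedComponentMk v).supp with hB
  have hau : u ∈ A := rfl
  have hbv : v ∈ B := rfl
  constructor
  · rintro ⟨a, b, p, q, hp, hq, hpart⟩
    have hru : ∀ w ∈ p.support, G.Reachable u w := fun w hw => ⟨p.takeUntil w hw⟩
    have hrv : ∀ w ∈ q.support, G.Reachable v w := fun w hw => ⟨q.takeUntil w hw⟩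
    have huv : G.connectedComponentMk u ≠ G.connectedComponentMk v := by
      intro he
      have hreach : ∀ w, G.Reachable u w := by
        intro w
        rcases hpart w with ⟨hw, -⟩ | ⟨hw, -⟩
        · exact hru w hw
        · exact (ConnectedComponent.eq.mp he).trans (hrv w hw)
      exact hdisc (by haveI : Nonempty V := ⟨u⟩
                      exact ⟨fun w1 w2 => (hreach w1).symm.trans (hreach w2)⟩)
    have hcompP : ∀ w ∈ p.support, G.connectedComponentMk w = G.connectedComponentMk u :=
      fun w hw => ConnectedComponent.eq.mpr (hru w hw).symm
    have hcompQ : ∀ w ∈ q.support, G.connectedComponentMk w = G.connectedComponentMk v :=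
      fun w hw => ConnectedComponent.eq.mpr (hrv w hw).symm
    have hcard : Nat.card G.ConnectedComponent = 2 := by
      rw [Nat.card_eq_two_iff]
      refine ⟨G.connectedComponentMk u, G.connectedComponentMk v, huv, ?_⟩
      rw [Set.eq_univ_iff_forall]
      refine ConnectedComponent.forall.2 (fun w => ?_)
      rcases hpart w with ⟨hw, -⟩ | ⟨hw, -⟩
      · simp [hcompP w hw]
      · simp [hcompQ w hw]
    have hsuppP : ∀ w, w ∈ p.support ↔ w ∈ A := by
      intro w
      constructor
      · intro hw
        exact (ConnectedComponent.mem_supp_iff _ _).mpr (hcompP w hw)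
      · intro hw
        rcases hpart w with ⟨h1, -⟩ | ⟨h1, -⟩
        · exact h1
        · exact absurd (((ConnectedComponent.mem_supp_iff _ _).mp hw).symm.trans
            (hcompQ w h1)) huv
    have hsuppQ : ∀ w, w ∈ q.support ↔ w ∈ B := by
      intro w
      constructor
      · intro hw
        exact (ConnectedComponent.mem_supp_iff _ _).mpr (hcompQ w hw)
      · intro hw
        rcases hpart w with ⟨h1, -⟩ | ⟨h1, -⟩
        · exact absurd (((ConnectedComponent.mem_supp_iff _ _).mp hw).symm.trans
            (hcompP w h1)).symm huv
        · exact h1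
    refine ⟨hcard, huv, ?_, ?_⟩
    · obtain ⟨p1, hmap⟩ := lift_walk (A := A) p (fun x hx => (hsuppP x).mp hx) hau
        ((hsuppP a).mp p.end_mem_support)
      have hp1 : p1.IsPath := Walk.IsPath.mk'
        (List.Nodup.of_map _ (hmap ▸ hp.support_nodup))
      have hcov1 : ∀ w : A, w ∈ p1.support := by
        intro w
        have hw : (w : V) ∈ p.support := (hsuppP _).mpr w.2
        rw [← hmap, List.mem_map] at hw
        obtain ⟨x, hx, hxw⟩ := hw
        rwa [← Subtype.ext hxw]
      exact noncut_of_hampath _ p1 hp1 hcov1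
    · obtain ⟨q1, hmap⟩ := lift_walk (A := B) q (fun x hx => (hsuppQ x).mp hx) hbv
        ((hsuppQ b).mp q.end_mem_support)
      have hq1 : q1.IsPath := Walk.IsPath.mk'
        (List.Nodup.of_map _ (hmap ▸ hq.support_nodup))
      have hcov1 : ∀ w : B, w ∈ q1.support := by
        intro w
        have hw : (w : V) ∈ q.support := (hsuppQ _).mpr w.2
        rw [← hmap, List.mem_map] at hw
        obtain ⟨x, hx, hxw⟩ := hw
        rwa [← Subtype.ext hxw]
      exact noncut_of_hampath _ q1 hq1 hcov1
  · rintro ⟨hcard, huv, hcu, hcv⟩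
    have hcomp : ∀ w, G.connectedComponentMk w = G.connectedComponentMk u ∨
        G.connectedComponentMk w = G.connectedComponentMk v := by
      intro w
      obtain ⟨x, y, hxy, hXY⟩ := Nat.card_eq_two_iff.mp hcard
      have hU : G.connectedComponentMk u ∈ ({x, y} : Set _) := hXY ▸ Set.mem_univ _
      have hV : G.connectedComponentMk v ∈ ({x, y} : Set _) := hXY ▸ Set.mem_univ _
      have hW : G.connectedComponentMk w ∈ ({x, y} : Set _) := hXY ▸ Set.mem_univ _
      simp only [Set.mem_insert_iff, Set.mem_singleton_iff] at hU hV hW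
      rcases hU with h1 | h1 <;> rcases hV with h2 | h2 <;> rcases hW with h3 | h3 <;>
        simp_all
    -- connectivity of the two components
    have hconnA : (G.induce A).Connected := by
      haveI : Nonempty A := ⟨⟨u, hau⟩⟩
      refine ⟨fun c d => ?_⟩
      have hcd : G.Reachable c.1 d.1 :=
        (ConnectedComponent.eq.mp (((ConnectedComponent.mem_supp_iff _ _).mp c.2).trans
          ((ConnectedComponent.mem_supp_iff _ _).mp d.2).symm))
      obtain ⟨r⟩ := hcd
      have hrs : ∀ x ∈ r.support, x ∈ A := by
        intro x hx
        have : G.Reachable c.1 x := ⟨r.takeUntil x hx⟩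
        have h5 : G.connectedComponentMk x = G.connectedComponentMk c.1 :=
          ConnectedComponent.eq.mpr this.symm
        rw [hA, ConnectedComponent.mem_supp_iff, h5]
        exact (ConnectedComponent.mem_supp_iff _ _).mp c.2
      obtain ⟨q1, -⟩ := lift_walk (A := A) r hrs c.2 d.2
      exact ⟨q1⟩
    have hconnB : (G.induce B).Connected := by
      haveI : Nonempty B := ⟨⟨v, hbv⟩⟩
      refine ⟨fun c d => ?_⟩
      have hcd : G.Reachable c.1 d.1 :=
        (ConnectedComponent.eq.mp (((ConnectedComponent.mem_supp_iff _ _).mp c.2).trans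
          ((ConnectedComponent.mem_supp_iff _ _).mp d.2).symm))
      obtain ⟨r⟩ := hcd
      have hrs : ∀ x ∈ r.support, x ∈ B := by
        intro x hx
        have : G.Reachable c.1 x := ⟨r.takeUntil x hx⟩
        have h5 : G.connectedComponentMk x = G.connectedComponentMk c.1 :=
          ConnectedComponent.eq.mpr this.symm
        rw [hB, ConnectedComponent.mem_supp_iff, h5]
        exact (ConnectedComponent.mem_supp_iff _ _).mp c.2
      obtain ⟨q1, -⟩ := lift_walk (A := B) r hrs c.2 d.2
      exact ⟨q1⟩
    -- independence bound 2 on each component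
    have hadjAB : ∀ x y : V, x ∈ A → y ∈ B → ¬ G.Adj x y := by
      intro x y hx hy hadj
      have h1 : G.connectedComponentMk x = G.connectedComponentMk y :=
        ConnectedComponent.eq.mpr hadj.reachable
      exact huv (((ConnectedComponent.mem_supp_iff _ _).mp hx).symm.trans
        (h1.trans ((ConnectedComponent.mem_supp_iff _ _).mp hy)))
    have hαA : IndepBound (G.induce A) 2 := by
      intro s hs
      have h6 := hα (insert v (s.map ⟨Subtype.val, Subtype.val_injective⟩)) ?_
      · have hvnot : v ∉ s.map ⟨Subtype.val, Subtype.val_injective⟩ := by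
          simp only [Finset.mem_map, Function.Embedding.coeFn_mk]
          rintro ⟨c, -, rfl⟩
          exact huv (((ConnectedComponent.mem_supp_iff _ _).mp c.2).symm)
        rw [Finset.card_insert_of_notMem hvnot, Finset.card_map] at h6
        omega
      · intro c hc d hd hcd
        simp only [Finset.mem_insert, Finset.mem_map, Function.Embedding.coeFn_mk] at hc hd
        rcases hc with rfl | ⟨c', hc', rfl⟩
        · rcases hd with rfl | ⟨d', hd', rfl⟩
          · exact absurd rfl hcd
          · exact fun h => hadjAB _ _ d'.2 hbv h.symm
        · rcases hd with rfl | ⟨d', hd', rfl⟩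
          · exact hadjAB _ _ c'.2 hbv
          · exact hs c' hc' d' hd' (fun h => hcd (congrArg _ h))
    have hαB : IndepBound (G.induce B) 2 := by
      intro s hs
      have h6 := hα (insert u (s.map ⟨Subtype.val, Subtype.val_injective⟩)) ?_
      · have hvnot : u ∉ s.map ⟨Subtype.val, Subtype.val_injective⟩ := by
          simp only [Finset.mem_map, Function.Embedding.coeFn_mk]
          rintro ⟨c, -, rfl⟩
          exact huv ((ConnectedComponent.mem_supp_iff _ _).mp c.2)
        rw [Finset.card_insert_of_notMem hvnot, Finset.card_map] at h6
        omega
      · intro c hc d hd hcd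
        simp only [Finset.mem_insert, Finset.mem_map, Function.Embedding.coeFn_mk] at hc hd
        rcases hc with rfl | ⟨c', hc', rfl⟩
        · rcases hd with rfl | ⟨d', hd', rfl⟩
          · exact absurd rfl hcd
          · exact hadjAB _ _ hau d'.2
        · rcases hd with rfl | ⟨d', hd', rfl⟩
          · exact fun h => hadjAB _ _ hau c'.2 h.symm
          · exact hs c' hc' d' hd' (fun h => hcd (congrArg _ h))
    obtain ⟨bu, pu, hpu⟩ := hampath_from_noncut (G.induce A) hconnA hαA ⟨u, rfl⟩ hcu
    obtain ⟨bv', pv, hpv⟩ := hampath_from_noncut (G.induce B) hconnB hαB ⟨v, rfl⟩ hcv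
    refine ⟨bu.1, bv'.1, pu.map (inclHom G A), pv.map (inclHom G B),
      Walk.map_isPath_of_injective Subtype.val_injective hpu.isPath,
      Walk.map_isPath_of_injective Subtype.val_injective hpv.isPath, ?_⟩
    have hmemP : ∀ w, w ∈ (pu.map (inclHom G A)).support ↔ w ∈ A := by
      intro w
      rw [Walk.support_map, List.mem_map]
      constructor
      · rintro ⟨c, -, rfl⟩
        exact c.2
      · intro hw
        exact ⟨⟨w, hw⟩, hpu.mem_support _, rfl⟩
    have hmemQ : ∀ w, w ∈ (pv.map (inclHom G B)).support ↔ w ∈ B := by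
      intro w
      rw [Walk.support_map, List.mem_map]
      constructor
      · rintro ⟨c, -, rfl⟩
        exact c.2
      · intro hw
        exact ⟨⟨w, hw⟩, hpv.mem_support _, rfl⟩
    intro w
    rcases hcomp w with h | h
    · left
      refine ⟨(hmemP w).mpr h, fun hw => ?_⟩
      have := (hmemQ w).mp hw
      exact huv (h.symm.trans ((ConnectedComponent.mem_supp_iff _ _).mp this))
    · right
      refine ⟨(hmemQ w).mpr h, fun hw => ?_⟩
      have := (hmemP w).mp hw
      exact huv (((ConnectedComponent.mem_supp_iff _ _).mp this).symm.trans h)
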